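/- Let x ∈ X, α > 0, and let p ∈ H be the global minimum point of g_{α,x}. Then for every h ∈ H one has the two-sided estimate 0 ≤ f_α(x + j h) − f_α(x) + (1/α)⟨p, h⟩_H ≤ (1/α)‖h‖²_H. -/

import Mathlib

open RealInnerProductSpace

/-- Two-sided estimate for the increments of the Moreau–Yosida approximation: if `p`
is the global minimum point of `g_{α,x}`, then for every `h`
`0 ≤ f_α(x + j h) - f_α(x) + (1/α)⟨p, h⟩ ≤ (1/α)‖h‖²`. -/
theorem moreauYosida_increment_estimate {X H : Type*} [NormedAddCommGroup X]
    [NormedSpace ℝ X] [CompleteSpace X] [NormedAddCommGroup H]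
    [InnerProductSpace ℝ H] [CompleteSpace H]
    (j : H →L[ℝ] X) (hj : Function.Injective j)
    (f : X → ℝ) (hconv : ConvexOn ℝ Set.univ f) (hlsc : LowerSemicontinuous f)
    (x : X) (α : ℝ) (hα : 0 < α) (p : H)
    (hp : ∀ h : H, f (x + j p) + ‖p‖ ^ 2 / (2 * α) ≤ f (x + j h) + ‖h‖ ^ 2 / (2 * α)) :
    ∀ h : H,
      0 ≤ (⨅ k : H, (f (x + j h + j k) + ‖k‖ ^ 2 / (2 * α))) -
          (⨅ k : H, (f (x + j k) + ‖k‖ ^ 2 / (2 * α))) + (1 / α) * ⟪p, h⟫ ∧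
      (⨅ k : H, (f (x + j h + j k) + ‖k‖ ^ 2 / (2 * α))) -
          (⨅ k : H, (f (x + j k) + ‖k‖ ^ 2 / (2 * α))) + (1 / α) * ⟪p, h⟫ ≤
        (1 / α) * ‖h‖ ^ 2 := by
  -- subgradient inequality at the minimizer p
  have key : ∀ m : H, f (x + j p) - ⟪p, m - p⟫ / α ≤ f (x + j m) := by
    intro m
    refine le_of_forall_pos_le_add (fun ε hε => ?_)
    set C : ℝ := ‖m - p‖ ^ 2 / (2 * α) with hC
    have hCnn : 0 ≤ C := by positivity
    set t : ℝ := min 1 (ε / (C + 1)) with ht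
    have ht0 : 0 < t := lt_min one_pos (by positivity)
    have ht1 : t ≤ 1 := min_le_left _ _
    have htC : t * C ≤ ε := by
      have h1 : t ≤ ε / (C + 1) := min_le_right _ _
      have : t * C ≤ (ε / (C + 1)) * (C + 1) := by
        have := mul_le_mul h1 (by linarith : C ≤ C + 1) hCnn (by positivity)
        linarith
      rwa [div_mul_cancel₀ _ (by positivity : (C : ℝ) + 1 ≠ 0)] at this
    -- convexity
    have hconvpt : f (x + j (p + t • (m - p))) ≤ (1 - t) * f (x + j p) + t * f (x + j m) := by
      have hx : (1 - t) • (x + j p) + t • (x + j m) = x + j (p + t • (m - p)) := by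
        rw [map_add, map_smul, map_sub]
        module
      have := hconv.2 (Set.mem_univ (x + j p)) (Set.mem_univ (x + j m))
        (by linarith : (0:ℝ) ≤ 1 - t) ht0.le (by ring)
      rwa [hx] at this
    have hmin := hp (p + t • (m - p))
    have hnorm : ‖p + t • (m - p)‖ ^ 2 = ‖p‖ ^ 2 + 2 * (t * ⟪p, m - p⟫) + t ^ 2 * ‖m - p‖ ^ 2 := by
      rw [norm_add_sq_real, real_inner_smul_right, norm_smul]
      simp [mul_pow, abs_of_nonneg ht0.le]
    -- combine: t * f(x+jp) ≤ t * f(x+jm) + t⟪p,m-p⟫/α + t²‖m-p‖²/(2α)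
    have hcomb : t * f (x + j p) ≤ t * f (x + j m) + t * ⟪p, m - p⟫ / α + t ^ 2 * ‖m - p‖ ^ 2 / (2 * α) := by
      have h2 : f (x + j p) + ‖p‖ ^ 2 / (2 * α) ≤
          (1 - t) * f (x + j p) + t * f (x + j m) + ‖p + t • (m - p)‖ ^ 2 / (2 * α) :=
        le_trans hmin (by linarith)
      rw [hnorm] at h2
      have hα' : (0:ℝ) < 2 * α := by linarith
      have e1 : (‖p‖ ^ 2 + 2 * (t * ⟪p, m - p⟫) + t ^ 2 * ‖m - p‖ ^ 2) / (2 * α) =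
          ‖p‖ ^ 2 / (2 * α) + t * ⟪p, m - p⟫ / α + t ^ 2 * ‖m - p‖ ^ 2 / (2 * α) := by
        field_simp
      rw [e1] at h2
      linarith
    have hdiv : f (x + j p) ≤ f (x + j m) + ⟪p, m - p⟫ / α + t * C := by
      have := hcomb
      rw [hC]
      have h3 : t * f (x + j p) ≤ t * (f (x + j m) + ⟪p, m - p⟫ / α + t * (‖m - p‖ ^ 2 / (2 * α))) := by
        ring_nf at this ⊢
        linarith
      exact le_of_mul_le_mul_left (by linarith) ht0
    linarith
  -- a uniform lower bound for the shifted family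
  intro h
  have hB : (⨅ k : H, (f (x + j k) + ‖k‖ ^ 2 / (2 * α))) = f (x + j p) + ‖p‖ ^ 2 / (2 * α) := by
    refine le_antisymm (ciInf_le ⟨f (x + j p) + ‖p‖ ^ 2 / (2 * α), ?_⟩ p) (le_ciInf hp)
    rintro y ⟨k, rfl⟩
    exact hp k
  set B : ℝ := f (x + j p) + ‖p‖ ^ 2 / (2 * α) with hBdef
  have hlow : ∀ k : H, B - ⟪p, h⟫ / α ≤ f (x + j h + j k) + ‖k‖ ^ 2 / (2 * α) := by
    intro k
    have hk := key (h + k)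
    have hjhk : x + j h + j k = x + j (h + k) := by rw [map_add]; abel
    rw [hjhk]
    have hinner : ⟪p, h + k - p⟫ = ⟪p, h⟫ + ⟪p, k⟫ - ⟪p, p⟫ := by
      rw [inner_sub_right, inner_add_right]
    have hkp : 0 ≤ ‖k - p‖ ^ 2 := sq_nonneg _
    have hkpexp : ‖k - p‖ ^ 2 = ‖k‖ ^ 2 - 2 * ⟪k, p⟫ + ‖p‖ ^ 2 := norm_sub_sq_real k p
    have hsym : ⟪p, k⟫ = ⟪k, p⟫ := (real_inner_comm k p)
    have hpp : ⟪p, p⟫ = ‖p‖ ^ 2 := real_inner_self_eq_norm_sq p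
    rw [hBdef]
    rw [hinner, hsym, hpp] at hk
    have hα' : (0:ℝ) < 2 * α := by linarith
    have e2 : (⟪p, h⟫ + ⟪k, p⟫ - ‖p‖ ^ 2) / α =
        ⟪p, h⟫ / α + (2 * ⟪k, p⟫ - 2 * ‖p‖ ^ 2) / (2 * α) := by
      field_simp; ring
    rw [e2] at hk
    have e3 : (2 * ⟪k, p⟫ - 2 * ‖p‖ ^ 2) / (2 * α) + ‖p‖ ^ 2 / (2 * α) ≤ ‖k‖ ^ 2 / (2 * α) := by
      rw [← add_div]
      gcongr
      nlinarith
    linarith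
  have hAlow : B - ⟪p, h⟫ / α ≤ ⨅ k : H, (f (x + j h + j k) + ‖k‖ ^ 2 / (2 * α)) :=
    le_ciInf hlow
  have hAup : (⨅ k : H, (f (x + j h + j k) + ‖k‖ ^ 2 / (2 * α))) ≤
      f (x + j p) + ‖p - h‖ ^ 2 / (2 * α) := by
    have hbdd : BddBelow (Set.range fun k : H => f (x + j h + j k) + ‖k‖ ^ 2 / (2 * α)) := by
      refine ⟨B - ⟪p, h⟫ / α, ?_⟩
      rintro y ⟨k, rfl⟩
      exact hlow k
    have := ciInf_le hbdd (p - h)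
    have hpt : x + j h + j (p - h) = x + j p := by rw [map_sub]; abel
    rwa [hpt] at this
  have hnormph : ‖p - h‖ ^ 2 = ‖p‖ ^ 2 - 2 * ⟪p, h⟫ + ‖h‖ ^ 2 := norm_sub_sq_real p h
  constructor
  · rw [hB]
    have : (0:ℝ) < α := hα
    have h1 : B - ⟪p, h⟫ / α ≤ ⨅ k : H, (f (x + j h + j k) + ‖k‖ ^ 2 / (2 * α)) := hAlow
    rw [hBdef] at h1
    have : ⟪p, h⟫ / α = (1 / α) * ⟪p, h⟫ := by ring
    linarith
  · rw [hB]
    rw [hnormph] at hAup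
    have hα' : (0:ℝ) < 2 * α := by linarith
    have : (‖p‖ ^ 2 - 2 * ⟪p, h⟫ + ‖h‖ ^ 2) / (2 * α) =
        ‖p‖ ^ 2 / (2 * α) - ⟪p, h⟫ / α + ‖h‖ ^ 2 / (2 * α) := by
      field_simp
    have hhsq : ‖h‖ ^ 2 / (2 * α) ≤ (1 / α) * ‖h‖ ^ 2 := by
      rw [div_le_iff₀ hα']
      have h0 : (0:ℝ) ≤ ‖h‖ ^ 2 := sq_nonneg _
      have he : (1 / α) * ‖h‖ ^ 2 * (2 * α) = 2 * ‖h‖ ^ 2 := by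
        field_simp
      rw [he]; linarith
    have hph : ⟪p, h⟫ / α = (1 / α) * ⟪p, h⟫ := by ring
    linarith
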